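/- Let H be a negative, sublinear, Γ-invariant function on the open future cone 𝓕. Then the set K = {x ∈ 𝓕 : ⟨x,η⟩₋ ≤ H(η) for all η ∈ 𝓕} is a Γ-convex body whose extended support function is H. -/

import Mathlib

open Pointwise

noncomputable section

/-- The Minkowski bilinear form on ℝ^{d+1}. -/
def mink (d : ℕ) (x y : Fin (d+1) → ℝ) : ℝ :=
  (∑ i : Fin d, x i.castSucc * y i.castSucc) - x (Fin.last d) * y (Fin.last d)

/-- The open future cone. -/
def FutureCone (d : ℕ) : Set (Fin (d+1) → ℝ) :=
  {x | mink d x x < 0 ∧ 0 < x (Fin.last d)}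

/-- The hyperboloid model of hyperbolic space. -/
def Hyperboloid (d : ℕ) : Set (Fin (d+1) → ℝ) :=
  {x | mink d x x = -1 ∧ 0 < x (Fin.last d)}

/-- A Fuchsian group: linear isometries of the Minkowski form preserving the future
cone and acting freely cocompactly on the hyperboloid. -/
structure IsFuchsian (d : ℕ)
    (Γ : Subgroup ((Fin (d+1) → ℝ) ≃ₗ[ℝ] (Fin (d+1) → ℝ))) : Prop where
  isom : ∀ γ ∈ Γ, ∀ x y, mink d (γ x) (γ y) = mink d x y
  cone : ∀ γ ∈ Γ, ∀ x ∈ FutureCone d, γ x ∈ FutureCone d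
  free : ∀ γ ∈ Γ, γ ≠ 1 → ∀ x ∈ Hyperboloid d, γ x ≠ x
  cocompact : ∃ C : Set (Fin (d+1) → ℝ), IsCompact C ∧ C ⊆ Hyperboloid d ∧
    ∀ x ∈ Hyperboloid d, ∃ γ ∈ Γ, ∃ c ∈ C, γ c = x

/-- A Γ-convex (Fuchsian convex) body. -/
structure IsFuchsianConvexBody (d : ℕ)
    (Γ : Subgroup ((Fin (d+1) → ℝ) ≃ₗ[ℝ] (Fin (d+1) → ℝ)))
    (K : Set (Fin (d+1) → ℝ)) : Prop where
  nonempty : K.Nonempty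
  isClosed : IsClosed K
  convex : Convex ℝ K
  subset : K ⊆ FutureCone d
  proper : K ≠ FutureCone d
  invariant : ∀ γ ∈ Γ, (⇑γ) '' K = K

namespace Stmt11Aux

variable {d : ℕ}

lemma mink_comm (x y : Fin (d+1) → ℝ) : mink d x y = mink d y x := by
  unfold mink
  rw [Finset.sum_congr rfl fun i _ => mul_comm (x i.castSucc) (y i.castSucc),
    mul_comm (x (Fin.last d))]

lemma mink_smul_left (a : ℝ) (x y : Fin (d+1) → ℝ) :
    mink d (a • x) y = a * mink d x y := by
  unfold mink
  rw [mul_sub, Finset.mul_sum]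
  congr 1
  · exact Finset.sum_congr rfl fun i _ => by simp [mul_assoc]
  · simp [mul_assoc]

lemma mink_smul_right (a : ℝ) (x y : Fin (d+1) → ℝ) :
    mink d x (a • y) = a * mink d x y := by
  rw [mink_comm, mink_smul_left, mink_comm]

lemma mink_add_left (x y z : Fin (d+1) → ℝ) :
    mink d (x + y) z = mink d x z + mink d y z := by
  unfold mink
  simp only [Pi.add_apply, add_mul, Finset.sum_add_distrib]
  ring

lemma mink_add_right (x y z : Fin (d+1) → ℝ) :
    mink d x (y + z) = mink d x y + mink d x z := by
  rw [mink_comm, mink_add_left, mink_comm y x, mink_comm z x]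

lemma continuous_mink_left (η : Fin (d+1) → ℝ) :
    Continuous fun x : Fin (d+1) → ℝ => mink d x η := by
  unfold mink
  fun_prop

lemma continuous_mink_self :
    Continuous fun x : Fin (d+1) → ℝ => mink d x x := by
  unfold mink
  fun_prop

lemma cone_open : IsOpen (FutureCone d) := by
  have h1 : IsOpen {x : Fin (d+1) → ℝ | mink d x x < 0} :=
    isOpen_lt continuous_mink_self continuous_const
  have h2 : IsOpen {x : Fin (d+1) → ℝ | 0 < x (Fin.last d)} :=
    isOpen_lt continuous_const (continuous_apply _)
  exact h1.inter h2

/-- reverse Cauchy–Schwarz : the form is negative on pairs of future timelike vectors -/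
lemma mink_neg_of_mem {x y : Fin (d+1) → ℝ} (hx : x ∈ FutureCone d)
    (hy : y ∈ FutureCone d) : mink d x y < 0 := by
  obtain ⟨hx1, hx2⟩ := hx
  obtain ⟨hy1, hy2⟩ := hy
  have hcs := Finset.sum_mul_sq_le_sq_mul_sq Finset.univ
    (fun i : Fin d => x i.castSucc) (fun i : Fin d => y i.castSucc)
  have hA : (0:ℝ) ≤ ∑ i : Fin d, x i.castSucc ^ 2 :=
    Finset.sum_nonneg fun i _ => sq_nonneg _
  have hB : (0:ℝ) ≤ ∑ i : Fin d, y i.castSucc ^ 2 :=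
    Finset.sum_nonneg fun i _ => sq_nonneg _
  have hx1' : ∑ i : Fin d, x i.castSucc ^ 2 < x (Fin.last d) ^ 2 := by
    have : ∑ i : Fin d, x i.castSucc * x i.castSucc =
        ∑ i : Fin d, x i.castSucc ^ 2 := by
      exact Finset.sum_congr rfl fun i _ => by ring
    unfold mink at hx1; nlinarith [hx1]
  have hy1' : ∑ i : Fin d, y i.castSucc ^ 2 < y (Fin.last d) ^ 2 := by
    have : ∑ i : Fin d, y i.castSucc * y i.castSucc =
        ∑ i : Fin d, y i.castSucc ^ 2 := by
      exact Finset.sum_congr rfl fun i _ => by ring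
    unfold mink at hy1; nlinarith [hy1]
  unfold mink
  have hprod : (∑ i : Fin d, x i.castSucc ^ 2) * ∑ i : Fin d, y i.castSucc ^ 2 <
      x (Fin.last d) ^ 2 * y (Fin.last d) ^ 2 := by nlinarith [hA, hB]
  nlinarith [hcs, mul_pos hx2 hy2, hprod]

lemma cone_smul {x : Fin (d+1) → ℝ} (hx : x ∈ FutureCone d) {l : ℝ} (hl : 0 < l) :
    l • x ∈ FutureCone d := by
  obtain ⟨h1, h2⟩ := hx
  refine ⟨?_, ?_⟩
  · rw [mink_smul_left, mink_smul_right]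
    nlinarith [mul_pos hl hl]
  · simpa using mul_pos hl h2

lemma cone_add {x y : Fin (d+1) → ℝ} (hx : x ∈ FutureCone d) (hy : y ∈ FutureCone d) :
    x + y ∈ FutureCone d := by
  have h := mink_neg_of_mem hx hy
  refine ⟨?_, ?_⟩
  · rw [mink_add_left, mink_add_right, mink_add_right, mink_comm y x]
    have := hx.1; have := hy.1; linarith
  · have := hx.2; have := hy.2
    simpa using by linarith

lemma cone_convex : Convex ℝ (FutureCone d) := by
  intro x hx y hy a b ha hb hab
  rcases ha.eq_or_lt with rfl | ha'
  · have hb1 : b = 1 := by linarith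
    subst hb1; simpa using hy
  rcases hb.eq_or_lt with rfl | hb'
  · have ha1 : a = 1 := by linarith
    subst ha1; simpa using hx
  exact cone_add (cone_smul hx ha') (cone_smul hy hb')

lemma hyp_subset : Hyperboloid d ⊆ FutureCone d := fun x hx =>
  ⟨by rw [hx.1]; norm_num, hx.2⟩

/-- basis vectors -/
def eb (d : ℕ) (j : Fin (d+1)) : Fin (d+1) → ℝ := fun k => if j = k then 1 else 0

lemma mink_eb_last (x : Fin (d+1) → ℝ) :
    mink d x (eb d (Fin.last d)) = - x (Fin.last d) := by
  unfold mink eb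
  have h : ∀ i : Fin d, (if Fin.last d = i.castSucc then (1:ℝ) else 0) = 0 :=
    fun i => if_neg (Fin.castSucc_lt_last i).ne'
  simp [h]

lemma eb_last_mem_hyp : eb d (Fin.last d) ∈ Hyperboloid d := by
  constructor
  · have := mink_eb_last (d := d) (eb d (Fin.last d))
    rw [this]; simp [eb]
  · simp [eb]


section WithH
variable (H : (Fin (d+1) → ℝ) → ℝ)

lemma Hconvex
    (hhom : ∀ η ∈ FutureCone d, ∀ l : ℝ, 0 < l → H (l • η) = l * H η)
    (hsub : ∀ η ∈ FutureCone d, ∀ μ ∈ FutureCone d, H (η + μ) ≤ H η + H μ) :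
    ConvexOn ℝ (FutureCone d) H := by
  refine ⟨cone_convex, fun x hx y hy a b ha hb hab => ?_⟩
  rcases ha.eq_or_lt with rfl | ha'
  · have hb1 : b = 1 := by linarith
    subst hb1; simp
  rcases hb.eq_or_lt with rfl | hb'
  · have ha1 : a = 1 := by linarith
    subst ha1; simp
  calc H (a • x + b • y) ≤ H (a • x) + H (b • y) :=
        hsub _ (cone_smul hx ha') _ (cone_smul hy hb')
    _ = a * H x + b * H y := by rw [hhom x hx a ha', hhom y hy b hb']

lemma Hbound
    (Γ : Subgroup ((Fin (d+1) → ℝ) ≃ₗ[ℝ] (Fin (d+1) → ℝ)))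
    (hcoc : ∃ C : Set (Fin (d+1) → ℝ), IsCompact C ∧ C ⊆ Hyperboloid d ∧
      ∀ x ∈ Hyperboloid d, ∃ γ ∈ Γ, ∃ c ∈ C, γ c = x)
    (hneg : ∀ η ∈ FutureCone d, H η < 0)
    (hinv : ∀ γ ∈ Γ, ∀ η ∈ FutureCone d, H (γ η) = H η)
    (hcont : ContinuousOn H (FutureCone d)) :
    ∃ m : ℝ, 0 < m ∧ ∀ η ∈ Hyperboloid d, H η ≤ -m := by
  obtain ⟨C, hCc, hCH, hcov⟩ := hcoc
  have hCF : C ⊆ FutureCone d := fun c hc => hyp_subset (hCH hc)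
  have hne : C.Nonempty := by
    obtain ⟨γ, hγ, c, hc, -⟩ := hcov (eb d (Fin.last d)) eb_last_mem_hyp
    exact ⟨c, hc⟩
  obtain ⟨c₀, hc₀, hmax⟩ := hCc.exists_isMaxOn hne (hcont.mono hCF)
  refine ⟨-H c₀, neg_pos.2 (hneg c₀ (hCF hc₀)), fun η hη => ?_⟩
  obtain ⟨γ, hγ, c, hc, hgc⟩ := hcov η hη
  have h1 : H η = H c := by rw [← hgc, hinv γ hγ c (hCF hc)]
  have h2 : H c ≤ H c₀ := hmax hc
  rw [h1]; linarith

/-- coercivity: anything dominated by H in all future directions is itself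
in the open future cone. -/
lemma mem_cone_of_forall_le
    {m : ℝ} (hm : 0 < m) (hmH : ∀ η ∈ Hyperboloid d, H η ≤ -m)
    (hneg : ∀ η ∈ FutureCone d, H η < 0)
    (x : Fin (d+1) → ℝ) (hx : ∀ η ∈ FutureCone d, mink d x η ≤ H η) :
    x ∈ FutureCone d := by
  have heF : eb d (Fin.last d) ∈ FutureCone d := hyp_subset eb_last_mem_hyp
  have hxl : 0 < x (Fin.last d) := by
    have h1 := hx _ heF
    rw [mink_eb_last] at h1
    have h2 := hneg _ heF
    linarith
  refine ⟨?_, hxl⟩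
  by_contra hcon
  push_neg at hcon
  -- notation
  set X := x (Fin.last d) with hX
  set A := ∑ i : Fin d, x i.castSucc ^ 2 with hA
  have hAX : X ^ 2 ≤ A := by
    have hsq : ∑ i : Fin d, x i.castSucc * x i.castSucc = A :=
      Finset.sum_congr rfl fun i _ => by ring
    unfold mink at hcon
    nlinarith [hcon]
  have hA0 : 0 < A := lt_of_lt_of_le (by positivity) hAX
  set N := Real.sqrt A with hN
  have hN0 : 0 < N := Real.sqrt_pos.2 hA0
  have hN2 : N ^ 2 = A := Real.sq_sqrt hA0.le
  have hNX : X ≤ N := by nlinarith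
  obtain ⟨s, hs⟩ : ∃ s : ℝ, s = Real.log (X / m + 1) + 1 := ⟨_, rfl⟩
  have hXm : 0 < X / m + 1 := by positivity
  have hs0 : 0 < s := by
    have : 0 ≤ Real.log (X / m + 1) := Real.log_nonneg (by nlinarith [div_nonneg hxl.le hm.le])
    rw [hs]; linarith
  obtain ⟨η, hηdef⟩ : ∃ η : Fin (d+1) → ℝ, η =
      fun j => if j = Fin.last d then Real.cosh s else (Real.sinh s / N) * x j := ⟨_, rfl⟩
  have hηcs : ∀ i : Fin d, η i.castSucc = (Real.sinh s / N) * x i.castSucc :=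
    fun i => by rw [hηdef]; exact if_neg (Fin.castSucc_lt_last i).ne
  have hηl : η (Fin.last d) = Real.cosh s := by rw [hηdef]; simp
  have hcosh : 0 < Real.cosh s := Real.cosh_pos _
  have hsinh : 0 < Real.sinh s := Real.sinh_pos_iff.2 hs0
  have hηhyp : η ∈ Hyperboloid d := by
    constructor
    · unfold mink
      rw [hηl]
      rw [Finset.sum_congr rfl fun i (_ : i ∈ Finset.univ) => by
        rw [hηcs i]]
      have hsum : ∑ i : Fin d, (Real.sinh s / N) * x i.castSucc *
          ((Real.sinh s / N) * x i.castSucc) = (Real.sinh s / N)^2 * A := by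
        rw [hA, Finset.mul_sum]
        exact Finset.sum_congr rfl fun i _ => by ring
      rw [hsum]
      have h1 : (Real.sinh s / N)^2 * A = Real.sinh s ^ 2 := by
        rw [div_pow, hN2]; field_simp
      rw [h1]
      have := Real.cosh_sq_sub_sinh_sq s
      linarith
    · rw [hηl]; exact hcosh
  have hle := hx η (hyp_subset hηhyp)
  have hHη := hmH η hηhyp
  -- compute mink x η
  have hmx : mink d x η = (Real.sinh s / N) * A - X * Real.cosh s := by
    unfold mink
    rw [hηl]
    rw [Finset.sum_congr rfl fun i (_ : i ∈ Finset.univ) => by rw [hηcs i]]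
    rw [hA, Finset.mul_sum]
    congr 1
    exact Finset.sum_congr rfl fun i _ => by ring
  rw [hmx] at hle
  have hsA : (Real.sinh s / N) * A = Real.sinh s * N := by
    rw [← hN2]; field_simp
  rw [hsA] at hle
  -- lower bound for the left side
  have hlow : X * (Real.sinh s - Real.cosh s) ≤ Real.sinh s * N - X * Real.cosh s := by
    nlinarith [mul_le_mul_of_nonneg_left hNX hsinh.le]
  have hexp : Real.sinh s - Real.cosh s = -Real.exp (-s) := Real.sinh_sub_cosh s
  have hexps : Real.exp (-s) = 1 / (Real.exp 1 * (X / m + 1)) := by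
    rw [hs, neg_add, Real.exp_add, Real.exp_neg, Real.exp_neg, Real.exp_log hXm]
    rw [one_div, mul_inv, mul_comm]
  have he1 : (1:ℝ) < Real.exp 1 := by
    have := Real.add_one_lt_exp (x := 1) one_ne_zero
    linarith
  -- X * exp (-s) < m
  have hfin : X * Real.exp (-s) < m := by
    rw [hexps, mul_one_div, div_lt_iff₀ (by positivity)]
    have h1 : 0 < m * (Real.exp 1 - 1) := mul_pos hm (sub_pos.2 he1)
    have h2 : 0 < X * (Real.exp 1 - 1) := mul_pos hxl (sub_pos.2 he1)
    have h3 : m * (Real.exp 1 * (X / m + 1)) = Real.exp 1 * X + Real.exp 1 * m := by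
      field_simp
    nlinarith
  nlinarith [hle, hHη, hlow, hexp, hfin]


lemma my_pi (L : (Fin (d+1) → ℝ) →ₗ[ℝ] ℝ) (η : Fin (d+1) → ℝ) :
    L η = ∑ j : Fin (d+1), η j * L (eb d j) := by
  rw [L.pi_apply_eq_sum_univ η]
  exact Finset.sum_congr rfl fun j _ => by rw [smul_eq_mul]; rfl

lemma exists_subgrad
    (hconv : ConvexOn ℝ (FutureCone d) H)
    (hcont : ContinuousOn H (FutureCone d))
    (hhom : ∀ η ∈ FutureCone d, ∀ l : ℝ, 0 < l → H (l • η) = l * H η)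
    (η₀ : Fin (d+1) → ℝ) (hη₀ : η₀ ∈ FutureCone d) :
    ∃ x : Fin (d+1) → ℝ,
      (∀ η ∈ FutureCone d, mink d x η ≤ H η) ∧ mink d x η₀ = H η₀ := by
  classical
  set S : Set ((Fin (d+1) → ℝ) × ℝ) := {p | p.1 ∈ FutureCone d ∧ H p.1 < p.2} with hS
  have hSconv : Convex ℝ S := by
    rintro p ⟨hp1, hp2⟩ q ⟨hq1, hq2⟩ a b ha hb hab
    refine ⟨cone_convex hp1 hq1 ha hb hab, ?_⟩
    have hH := hconv.2 hp1 hq1 ha hb hab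
    have h1 : a * H p.1 ≤ a * p.2 := mul_le_mul_of_nonneg_left hp2.le ha
    have h2 : b * H q.1 ≤ b * q.2 := mul_le_mul_of_nonneg_left hq2.le hb
    rcases ha.eq_or_lt with rfl | ha'
    · have hb1 : b = 1 := by linarith
      have h3 : b * H q.1 < b * q.2 := by rw [hb1]; simpa using hq2
      calc H ((0:ℝ) • p.1 + b • q.1) ≤ 0 * H p.1 + b * H q.1 := hH
        _ < (0:ℝ) • p.2 + b • q.2 := by simp only [smul_eq_mul]; linarith
      -- the goal is `H _ < (a • p + b • q).2`; handled below if mismatch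
    · have h3 : a * H p.1 < a * p.2 := by
        exact mul_lt_mul_of_pos_left hp2 ha'
      calc H (a • p.1 + b • q.1) ≤ a * H p.1 + b * H q.1 := hH
        _ < a • p.2 + b • q.2 := by simp only [smul_eq_mul]; linarith
  have hSopen : IsOpen S := by
    rw [isOpen_iff_mem_nhds]
    rintro ⟨η, t⟩ ⟨hη, ht⟩
    have hHc : ContinuousAt H η := hcont.continuousAt (cone_open.mem_nhds hη)
    have h1 : ∀ᶠ p : (Fin (d+1) → ℝ) × ℝ in nhds (η, t), p.1 ∈ FutureCone d :=
      (cone_open.preimage continuous_fst).mem_nhds hη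
    have hc2 : ContinuousAt (fun p : (Fin (d+1) → ℝ) × ℝ => p.2 - H p.1) (η, t) :=
      ContinuousAt.sub continuousAt_snd (hHc.comp continuousAt_fst)
    have h0 : (0:ℝ) < t - H η := sub_pos.2 ht
    have h2 : ∀ᶠ p : (Fin (d+1) → ℝ) × ℝ in nhds (η, t), H p.1 < p.2 := by
      have h3 := hc2 (Ioi_mem_nhds h0)
      filter_upwards [h3] with p hp
      have : (0:ℝ) < p.2 - H p.1 := hp
      linarith
    exact h1.and h2
  have hnotin : ((η₀, H η₀) : (Fin (d+1) → ℝ) × ℝ) ∉ S := fun h => lt_irrefl _ h.2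
  obtain ⟨f, hf⟩ := geometric_hahn_banach_open_point hSconv hSopen hnotin
  set L : (Fin (d+1) → ℝ) →ₗ[ℝ] ℝ :=
    f.toLinearMap.comp (LinearMap.inl ℝ (Fin (d+1) → ℝ) ℝ) with hL
  set c : ℝ := f (0, 1) with hc
  have hdecomp : ∀ (v : Fin (d+1) → ℝ) (t : ℝ), f (v, t) = L v + t * c := by
    intro v t
    have hvt : ((v, t) : (Fin (d+1) → ℝ) × ℝ) = (v, 0) + t • (0, 1) := by
      simp [Prod.ext_iff]
    rw [hvt, map_add, map_smul, smul_eq_mul]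
    rfl
  -- c < 0
  have hcneg : c < 0 := by
    have h := hf (η₀, H η₀ + 1) ⟨hη₀, show H η₀ < H η₀ + 1 by linarith⟩
    rw [hdecomp, hdecomp] at h
    linarith
  -- main inequality
  have hmain : ∀ η ∈ FutureCone d, L η + H η * c ≤ L η₀ + H η₀ * c := by
    intro η hη
    by_contra hlt
    push_neg at hlt
    set ε : ℝ := (L η + H η * c - (L η₀ + H η₀ * c)) / (-c) with hε
    have hε0 : 0 < ε := div_pos (by linarith) (by linarith)
    have h := hf (η, H η + ε) ⟨hη, show H η < H η + ε by linarith⟩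
    rw [hdecomp, hdecomp] at h
    have hεc : ε * -c = L η + H η * c - (L η₀ + H η₀ * c) := by
      rw [hε]; exact div_mul_cancel₀ _ (by linarith)
    nlinarith [h, hεc]
  -- homogeneity forces equality at η₀
  have hD : L η₀ + H η₀ * c = 0 := by
    have h2 := hmain ((2:ℝ) • η₀) (cone_smul hη₀ (by norm_num))
    have hh2 : H ((2:ℝ) • η₀) = 2 * H η₀ := hhom η₀ hη₀ 2 (by norm_num)
    have hL2 : L ((2:ℝ) • η₀) = 2 * L η₀ := by rw [map_smul, smul_eq_mul]
    have h3 := hmain (((1:ℝ)/2) • η₀) (cone_smul hη₀ (by norm_num))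
    have hh3 : H (((1:ℝ)/2) • η₀) = (1/2) * H η₀ := hhom η₀ hη₀ (1/2) (by norm_num)
    have hL3 : L (((1:ℝ)/2) • η₀) = (1/2) * L η₀ := by rw [map_smul, smul_eq_mul]
    rw [hh2, hL2] at h2
    rw [hh3, hL3] at h3
    linarith
  have hc0 : c ≠ 0 := hcneg.ne
  -- the support point
  set x : Fin (d+1) → ℝ := fun j =>
    if j = Fin.last d then L (eb d j) / c else -(L (eb d j)) / c with hx
  have hmx : ∀ η : Fin (d+1) → ℝ, mink d x η = -(L η) / c := by
    intro η
    have hx1 : ∀ i : Fin d, x i.castSucc = -(L (eb d i.castSucc)) / c :=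
      fun i => if_neg (Fin.castSucc_lt_last i).ne
    have hx2 : x (Fin.last d) = L (eb d (Fin.last d)) / c := if_pos rfl
    unfold mink
    rw [hx2, Finset.sum_congr rfl fun i (_ : i ∈ Finset.univ) => by rw [hx1 i],
      my_pi L η, Fin.sum_univ_castSucc, neg_add, add_div]
    have hA : ∑ i : Fin d, -(L (eb d i.castSucc)) / c * η i.castSucc =
        -(∑ i : Fin d, η i.castSucc * L (eb d i.castSucc)) / c := by
      calc ∑ i : Fin d, -(L (eb d i.castSucc)) / c * η i.castSucc
          = ∑ i : Fin d, -(η i.castSucc * L (eb d i.castSucc)) / c :=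
            Finset.sum_congr rfl fun i _ => by ring
        _ = (∑ i : Fin d, -(η i.castSucc * L (eb d i.castSucc))) / c :=
            (Finset.sum_div _ _ _).symm
        _ = -(∑ i : Fin d, η i.castSucc * L (eb d i.castSucc)) / c := by
            rw [Finset.sum_neg_distrib]
    rw [hA]
    ring
  refine ⟨x, fun η hη => ?_, ?_⟩
  · rw [hmx η, div_le_iff_of_neg hcneg]
    have := hmain η hη
    nlinarith [hmain η hη, hD]
  · rw [hmx η₀]
    have hLη₀ : L η₀ = -(H η₀ * c) := by linarith
    rw [hLη₀, neg_neg, mul_div_assoc, div_self hc0, mul_one]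

end WithH
end Stmt11Aux

open Stmt11Aux

/-- A negative sublinear Γ-invariant function H on the future cone is the extended
support function of the Γ-convex body {x ∈ 𝓕 : ⟨x,η⟩₋ ≤ H(η) ∀η ∈ 𝓕}. -/
theorem stmt11 (d : ℕ) (Γ : Subgroup ((Fin (d+1) → ℝ) ≃ₗ[ℝ] (Fin (d+1) → ℝ)))
    (hΓ : IsFuchsian d Γ) (H : (Fin (d+1) → ℝ) → ℝ)
    (hneg : ∀ η ∈ FutureCone d, H η < 0)
    (hhom : ∀ η ∈ FutureCone d, ∀ l : ℝ, 0 < l → H (l • η) = l * H η)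
    (hsub : ∀ η ∈ FutureCone d, ∀ μ ∈ FutureCone d, H (η + μ) ≤ H η + H μ)
    (hinv : ∀ γ ∈ Γ, ∀ η ∈ FutureCone d, H (γ η) = H η) :
    IsFuchsianConvexBody d Γ
      {x ∈ FutureCone d | ∀ η ∈ FutureCone d, mink d x η ≤ H η} ∧
    ∀ η ∈ FutureCone d,
      IsLUB ((fun x => mink d x η) ''
        {x ∈ FutureCone d | ∀ η ∈ FutureCone d, mink d x η ≤ H η}) (H η) := by
  have hconv : ConvexOn ℝ (FutureCone d) H := Hconvex H hhom hsub
  have hcont : ContinuousOn H (FutureCone d) := hconv.continuousOn cone_open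
  obtain ⟨m, hm0, hmH⟩ := Hbound H Γ hΓ.cocompact hneg hinv hcont
  have key : ∀ x : Fin (d+1) → ℝ, (∀ η ∈ FutureCone d, mink d x η ≤ H η) →
      x ∈ FutureCone d := fun x hx => mem_cone_of_forall_le H hm0 hmH hneg x hx
  have heF : eb d (Fin.last d) ∈ FutureCone d := hyp_subset eb_last_mem_hyp
  set K : Set (Fin (d+1) → ℝ) :=
    {x ∈ FutureCone d | ∀ η ∈ FutureCone d, mink d x η ≤ H η} with hK
  have step : ∀ δ ∈ Γ, ∀ x ∈ K, δ x ∈ K := by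
    intro δ hδ x hx
    refine ⟨hΓ.cone δ hδ x hx.1, fun η hη => ?_⟩
    have hδinv : δ⁻¹ ∈ Γ := inv_mem hδ
    have hδη : (δ⁻¹ : (Fin (d+1) → ℝ) ≃ₗ[ℝ] (Fin (d+1) → ℝ)) η ∈ FutureCone d :=
      hΓ.cone _ hδinv η hη
    have happ : δ ((δ⁻¹ : (Fin (d+1) → ℝ) ≃ₗ[ℝ] (Fin (d+1) → ℝ)) η) = η :=
      δ.apply_symm_apply η
    have h1 : mink d (δ x) η = mink d x ((δ⁻¹ : _) η) := by
      conv_lhs => rw [← happ]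
      rw [hΓ.isom δ hδ]
    rw [h1]
    calc mink d x ((δ⁻¹ : _) η) ≤ H ((δ⁻¹ : _) η) := hx.2 _ hδη
      _ = H (δ ((δ⁻¹ : _) η)) := (hinv δ hδ _ hδη).symm
      _ = H η := by rw [happ]
  constructor
  · constructor
    · obtain ⟨x₀, hx₀, -⟩ := exists_subgrad H hconv hcont hhom _ heF
      exact ⟨x₀, key x₀ hx₀, hx₀⟩
    · have hKeq : K = ⋂ η ∈ FutureCone d, {x | mink d x η ≤ H η} := by
        ext x
        simp only [hK, Set.mem_setOf_eq, Set.mem_iInter, Set.sep_setOf]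
        exact ⟨fun h => h.2, fun h => ⟨key x h, h⟩⟩
      rw [hKeq]
      exact isClosed_biInter fun η hη =>
        isClosed_le (continuous_mink_left η) continuous_const
    · intro x hx y hy a b ha hb hab
      refine ⟨cone_convex hx.1 hy.1 ha hb hab, fun η hη => ?_⟩
      rw [mink_add_left, mink_smul_left, mink_smul_left]
      have h1 : a * mink d x η ≤ a * H η := mul_le_mul_of_nonneg_left (hx.2 η hη) ha
      have h2 : b * mink d y η ≤ b * H η := mul_le_mul_of_nonneg_left (hy.2 η hη) hb
      have h3 : a * H η + b * H η = H η := by rw [← add_mul, hab, one_mul]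
      linarith
    · exact fun x hx => hx.1
    · intro h
      have hHe : H (eb d (Fin.last d)) < 0 := hneg _ heF
      have ht0 : 0 < -(H (eb d (Fin.last d))) / 2 := by linarith
      have hx₁F : (-(H (eb d (Fin.last d))) / 2) • eb d (Fin.last d) ∈ FutureCone d :=
        cone_smul heF ht0
      have hx₁K : (-(H (eb d (Fin.last d))) / 2) • eb d (Fin.last d) ∈ K := h.symm ▸ hx₁F
      have h2 := hx₁K.2 _ heF
      rw [mink_smul_left, eb_last_mem_hyp.1] at h2
      linarith
    · intro γ hγ
      apply Set.Subset.antisymm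
      · rintro y ⟨x, hx, rfl⟩
        exact step γ hγ x hx
      · intro x hx
        refine ⟨(γ⁻¹ : (Fin (d+1) → ℝ) ≃ₗ[ℝ] (Fin (d+1) → ℝ)) x,
          step γ⁻¹ (inv_mem hγ) x hx, γ.apply_symm_apply x⟩
  · intro η hη
    obtain ⟨x, hxP, hxeq⟩ := exists_subgrad H hconv hcont hhom η hη
    refine IsGreatest.isLUB ⟨⟨x, ⟨key x hxP, hxP⟩, hxeq⟩, ?_⟩
    rintro y ⟨z, hz, rfl⟩
    exact hz.2 η hη
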